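/- (Lemma A.1.) Let n ≥ 2, let Q = diag(q_1,…,q_n) with q_i > 0, and let L_c ∈ ℝ^{n×n} be the Laplacian of a connected undirected graph, i.e. L_c is symmetric, (L_c)_{ij} ≤ 0 for all i ≠ j, L_c𝟙 = 0, and ker(L_c) = span{𝟙}. Define Q̄ := Q^{-1}𝟙𝟙ᵀQ^{-1}/(𝟙ᵀQ^{-1}𝟙) − Q^{-1}, and for γ ≥ 0 let Q̃ ∈ ℝ^{(n+1)×n} be the matrix obtained by stacking γQ̄ − L_cQ on top of the row 𝟙ᵀ. Then for every γ ≥ 0 the matrices γQ̄ − L_cQ + 𝟙𝟙ᵀ, γQ̄ − L_cQ + (1/n)𝟙𝟙ᵀ, and Q̃ᵀQ̃ are all invertible. In particular (γ = 0) the matrix Φ := −L_cQ + (1/n)𝟙𝟙ᵀ is invertible. -/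

import Mathlib

open Matrix Filter

/-- Euclidean norm on `Fin k → ℝ`. -/
noncomputable def euclNorm {k : ℕ} (v : Fin k → ℝ) : ℝ :=
  ‖(WithLp.equiv 2 (Fin k → ℝ)).symm v‖

/-- Operator norm on matrices induced by the Euclidean norms. -/
noncomputable def matOpNorm {k l : ℕ} (A : Matrix (Fin k) (Fin l) ℝ) : ℝ :=
  ‖LinearMap.toContinuousLinearMap (Matrix.toEuclideanLin A)‖

/-- The all-ones vector `𝟙`. -/
def onesVec (k : ℕ) : Fin k → ℝ := fun _ => 1

/-- The all-ones matrix `𝟙𝟙ᵀ`. -/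
def onesMat (k : ℕ) : Matrix (Fin k) (Fin k) ℝ := Matrix.of fun _ _ => 1

/-- Scalar saturation: `sat(y; l, u) = l` if `y ≤ l`, `u` if `u ≤ y`, and `y` otherwise. -/
noncomputable def sat1 (y l u : ℝ) : ℝ := if y ≤ l then l else if u ≤ y then u else y

/-- Componentwise (multidimensional) saturation function. -/
noncomputable def satv {k : ℕ} (x xm xp : Fin k → ℝ) : Fin k → ℝ :=
  fun i => sat1 (x i) (xm i) (xp i)


/-- A symmetric matrix with nonpositive off-diagonal entries and zero row sums is PSD. -/
lemma lapPSD {n : ℕ} (Lc : Matrix (Fin n) (Fin n) ℝ) (hsymm : Lc.IsSymm)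
    (hoff : ∀ i j, i ≠ j → Lc i j ≤ 0) (hrow : ∀ i, ∑ j, Lc i j = 0)
    (v : Fin n → ℝ) : 0 ≤ v ⬝ᵥ (Lc *ᵥ v) := by
  have hcol : ∀ j : Fin n, ∑ i, Lc i j = 0 := by
    intro j
    calc ∑ i, Lc i j = ∑ i, Lc j i :=
          Finset.sum_congr rfl fun i _ => hsymm.apply j i
      _ = 0 := hrow j
  have key : ∑ i, ∑ j, (-Lc i j) * (v i - v j)^2 = 2 * (v ⬝ᵥ (Lc *ᵥ v)) := by
    have expand : ∑ i, ∑ j, (-Lc i j) * (v i - v j)^2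
        = ∑ i, ∑ j, ((-(Lc i j) * (v i)^2) + (2 * (v i * (Lc i j * v j))) + (-(Lc i j) * (v j)^2)) := by
      refine Finset.sum_congr rfl fun i _ => Finset.sum_congr rfl fun j _ => ?_
      ring
    have h1 : ∑ i : Fin n, ∑ j, -(Lc i j) * (v i)^2 = 0 := by
      refine Finset.sum_eq_zero fun i _ => ?_
      rw [← Finset.sum_mul, Finset.sum_neg_distrib, hrow i, neg_zero, zero_mul]
    have h2 : ∑ i : Fin n, ∑ j, -(Lc i j) * (v j)^2 = 0 := by
      rw [Finset.sum_comm]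
      refine Finset.sum_eq_zero fun j _ => ?_
      rw [← Finset.sum_mul, Finset.sum_neg_distrib, hcol j, neg_zero, zero_mul]
    have h3 : ∑ i : Fin n, ∑ j, 2 * (v i * (Lc i j * v j)) = 2 * (v ⬝ᵥ (Lc *ᵥ v)) := by
      simp only [dotProduct, mulVec, Finset.mul_sum]
    rw [expand]
    simp only [Finset.sum_add_distrib]
    rw [h1, h2, h3]
    ring
  have hnn : 0 ≤ ∑ i, ∑ j, (-Lc i j) * (v i - v j)^2 := by
    refine Finset.sum_nonneg fun i _ => Finset.sum_nonneg fun j _ => ?_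
    rcases eq_or_ne i j with rfl | hij
    · simp
    · exact mul_nonneg (by linarith [hoff i j hij]) (sq_nonneg _)
  nlinarith [key, hnn]


/-- Key kernel lemma. -/
lemma kerLemma {n : ℕ} (hn : 2 ≤ n) (q : Fin n → ℝ) (hq : ∀ i, 0 < q i)
    (Lc : Matrix (Fin n) (Fin n) ℝ) (hsymm : Lc.IsSymm)
    (hoff : ∀ i j, i ≠ j → Lc i j ≤ 0)
    (hrow : ∀ i, ∑ j, Lc i j = 0)
    (hker : LinearMap.ker Lc.mulVecLin = Submodule.span ℝ {onesVec n})
    {γ : ℝ} (hγ : 0 ≤ γ) {M : Matrix (Fin n) (Fin n) ℝ}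
    (hM : ∀ i j, M i j = γ * ((∑ k, (q k)⁻¹)⁻¹ * ((q i)⁻¹ * (q j)⁻¹)
        - (if i = j then (q i)⁻¹ else 0)) - Lc i j * q j)
    {x : Fin n → ℝ} (hx1 : ∑ i, x i = 0) (hMx : M *ᵥ x = 0) : x = 0 := by
  have hne : Nonempty (Fin n) := ⟨⟨0, by omega⟩⟩
  set s : ℝ := ∑ k, (q k)⁻¹ with hs
  set y : Fin n → ℝ := fun i => q i * x i with hy
  have h0 : y ⬝ᵥ (M *ᵥ x) = 0 := by rw [hMx, dotProduct_zero]
  have claim : ∀ i j, y i * (M i j * x j)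
      = γ * s⁻¹ * (x i * ((q j)⁻¹ * x j)) - γ * (if i = j then x i * x j else 0)
        - y i * (Lc i j * y j) := by
    intro i j
    have hqq : q i * (q i)⁻¹ = 1 := mul_inv_cancel₀ (hq i).ne'
    rw [hM i j, hy]
    rcases eq_or_ne i j with rfl | hij
    · simp only [eq_self_iff_true, if_true]
      linear_combination (γ * s⁻¹ * x i ^ 2 * (q i)⁻¹ - γ * x i ^ 2) * hqq
    · simp only [if_neg hij]
      have : q i * x i * ((γ * (s⁻¹ * ((q i)⁻¹ * (q j)⁻¹) - 0) - Lc i j * q j) * x j)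
          = (q i * (q i)⁻¹) * (γ * s⁻¹ * (x i * ((q j)⁻¹ * x j)))
            - (q i * x i) * (Lc i j * (q j * x j)) := by ring
      rw [this, hqq]
      ring
  have hexp : y ⬝ᵥ (M *ᵥ x)
      = γ * s⁻¹ * ((∑ i, x i) * (∑ j, (q j)⁻¹ * x j)) - γ * (∑ i, x i * x i)
        - y ⬝ᵥ (Lc *ᵥ y) := by
    have lhs : y ⬝ᵥ (M *ᵥ x) = ∑ i, ∑ j, y i * (M i j * x j) := by
      simp [dotProduct, mulVec, Finset.mul_sum]
    have rhsL : y ⬝ᵥ (Lc *ᵥ y) = ∑ i, ∑ j, y i * (Lc i j * y j) := by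
      simp [dotProduct, mulVec, Finset.mul_sum]
    rw [lhs, rhsL,
      Finset.sum_congr rfl fun i _ => Finset.sum_congr rfl fun j _ => claim i j]
    simp only [Finset.sum_sub_distrib]
    congr 1
    congr 1
    · rw [Finset.sum_mul_sum, Finset.mul_sum]
      refine Finset.sum_congr rfl fun i _ => ?_
      rw [Finset.mul_sum]
    · simp [Finset.mul_sum, mul_ite, mul_zero, Finset.sum_ite_eq]
  rw [hexp, hx1, zero_mul, mul_zero, zero_sub] at h0
  have hpsd := lapPSD Lc hsymm hoff hrow y
  have hxx : 0 ≤ ∑ i, x i * x i := Finset.sum_nonneg fun i _ => mul_self_nonneg _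
  have hyLy : y ⬝ᵥ (Lc *ᵥ y) = 0 := by nlinarith
  have hherm : Lc.PosSemidef := by
    refine Matrix.PosSemidef.of_dotProduct_mulVec_nonneg ?_ ?_
    · ext i j
      simp [Matrix.conjTranspose_apply, hsymm.apply i j]
    · intro z
      simpa using lapPSD Lc hsymm hoff hrow z
  have hLcy : Lc *ᵥ y = 0 := (hherm.dotProduct_mulVec_zero_iff y).mp (by simpa using hyLy)
  have hymem : y ∈ LinearMap.ker Lc.mulVecLin := by
    simp [LinearMap.mem_ker, Matrix.mulVecLin_apply, hLcy]
  rw [hker, Submodule.mem_span_singleton] at hymem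
  obtain ⟨c, hc⟩ := hymem
  have hyc : ∀ i, q i * x i = c := by
    intro i
    have h := congrFun hc i
    simp [onesVec, hy] at h
    exact h.symm
  have hxi : ∀ i, x i = c * (q i)⁻¹ := by
    intro i
    rw [← hyc i, mul_comm (q i) (x i), mul_inv_cancel_right₀ (hq i).ne']
  have hcs : c * s = 0 := by
    rw [hs, Finset.mul_sum, ← hx1]
    exact (Finset.sum_congr rfl fun i _ => (hxi i).symm)
  have hspos : 0 < s := Finset.sum_pos (fun i _ => inv_pos.mpr (hq i)) Finset.univ_nonempty
  have hc0 : c = 0 := by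
    rcases mul_eq_zero.mp hcs with h | h
    · exact h
    · exact absurd h hspos.ne'
  funext i
  rw [hxi i, hc0, zero_mul]
  rfl


/-- Adding a nonzero multiple of the all-ones matrix to a matrix with zero column sums. -/
lemma addOnes {n : ℕ} {M : Matrix (Fin n) (Fin n) ℝ} (hcol : ∀ j, ∑ i, M i j = 0)
    {c : ℝ} (hc : c * n ≠ 0) {v : Fin n → ℝ}
    (hv : (M + c • onesMat n) *ᵥ v = 0) : (∑ i, v i = 0) ∧ M *ᵥ v = 0 := by
  have hMv : ∀ w : Fin n → ℝ, ∑ i, (M *ᵥ w) i = 0 := by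
    intro w
    have : ∑ i, (M *ᵥ w) i = ∑ j, (∑ i, M i j) * w j := by
      simp only [mulVec, dotProduct]
      rw [Finset.sum_comm]
      exact Finset.sum_congr rfl fun j _ => by rw [Finset.sum_mul]
    rw [this]
    exact Finset.sum_eq_zero fun j _ => by rw [hcol j, zero_mul]
  have hones : ∀ i, ((c • onesMat n) *ᵥ v) i = c * ∑ j, v j := by
    intro i
    simp [mulVec, dotProduct, onesMat, Finset.mul_sum]
  have hsum0 : ∑ i, ((M + c • onesMat n) *ᵥ v) i = 0 := by rw [hv]; simp
  rw [Matrix.add_mulVec, Finset.sum_congr rfl fun i _ => by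
    rw [Pi.add_apply, hones i]] at hsum0
  rw [Finset.sum_add_distrib, hMv v, zero_add, Finset.sum_const, Finset.card_univ,
    Fintype.card_fin, nsmul_eq_mul] at hsum0
  have hv0 : ∑ j, v j = 0 := by
    have hcn : c ≠ 0 := fun h => hc (by rw [h, zero_mul])
    have hnn : (n : ℝ) ≠ 0 := fun h => hc (by rw [h, mul_zero])
    rcases mul_eq_zero.mp hsum0 with h | h
    · exact absurd h hnn
    · rcases mul_eq_zero.mp h with h' | h'
      · exact absurd h' hcn
      · exact h'
  refine ⟨hv0, ?_⟩
  have : (c • onesMat n) *ᵥ v = 0 := by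
    funext i
    rw [hones i, hv0, mul_zero]
    rfl
  rw [Matrix.add_mulVec, this, add_zero] at hv
  exact hv
/-- Lemma A.1: for every `γ ≥ 0` the matrices `γQ̄ − L_cQ + 𝟙𝟙ᵀ`,
`γQ̄ − L_cQ + (1/n)𝟙𝟙ᵀ` and `Q̃ᵀQ̃` are invertible; in particular `Φ` is invertible. -/
theorem lemmaA1_full_rank {n : ℕ} (hn : 2 ≤ n)
    (q : Fin n → ℝ) (hq : ∀ i, 0 < q i)
    (Lc : Matrix (Fin n) (Fin n) ℝ) (hsymm : Lc.IsSymm)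
    (hoff : ∀ i j, i ≠ j → Lc i j ≤ 0)
    (hLc1 : Lc *ᵥ onesVec n = 0)
    (hker : LinearMap.ker Lc.mulVecLin = Submodule.span ℝ {onesVec n})
    (Q Qinv Qbar Φ : Matrix (Fin n) (Fin n) ℝ)
    (hQ : Q = Matrix.diagonal q)
    (hQinv : Qinv = Matrix.diagonal fun i => (q i)⁻¹)
    (hQbar : Qbar =
      (onesVec n ⬝ᵥ (Qinv *ᵥ onesVec n))⁻¹ • (Qinv * onesMat n * Qinv) - Qinv)
    (hΦ : Φ = -(Lc * Q) + (n : ℝ)⁻¹ • onesMat n) :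
    (∀ γ : ℝ, 0 ≤ γ →
      IsUnit (γ • Qbar - Lc * Q + onesMat n).det ∧
      IsUnit (γ • Qbar - Lc * Q + (n : ℝ)⁻¹ • onesMat n).det ∧
      IsUnit ((Matrix.fromRows (γ • Qbar - Lc * Q)
          (Matrix.of fun (_ : Fin 1) (_ : Fin n) => (1:ℝ)))ᵀ *
        Matrix.fromRows (γ • Qbar - Lc * Q)
          (Matrix.of fun (_ : Fin 1) (_ : Fin n) => (1:ℝ))).det) ∧
    IsUnit Φ.det := by
  have hrow : ∀ i, ∑ j, Lc i j = 0 := by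
    intro i
    have := congrFun hLc1 i
    simpa [mulVec, dotProduct, onesVec] using this
  set s : ℝ := ∑ k, (q k)⁻¹ with hs
  have hne : Nonempty (Fin n) := ⟨⟨0, by omega⟩⟩
  have hspos : 0 < s := Finset.sum_pos (fun i _ => inv_pos.mpr (hq i)) Finset.univ_nonempty
  have hnR : (0:ℝ) < (n:ℝ) := by
    have : 0 < n := by omega
    exact_mod_cast this
  have hsv : onesVec n ⬝ᵥ (Qinv *ᵥ onesVec n) = s := by
    rw [hQinv]
    simp [dotProduct, mulVec_diagonal, onesVec, hs]
  have hQbarE : ∀ i j, Qbar i j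
      = s⁻¹ * ((q i)⁻¹ * (q j)⁻¹) - (if i = j then (q i)⁻¹ else 0) := by
    intro i j
    rw [hQbar, Matrix.sub_apply, Matrix.smul_apply, hsv]
    rw [hQinv, Matrix.mul_diagonal, Matrix.diagonal_mul, Matrix.diagonal_apply]
    simp [onesMat]
    try ring
  have hME : ∀ γ : ℝ, ∀ i j, (γ • Qbar - Lc * Q) i j
      = γ * (s⁻¹ * ((q i)⁻¹ * (q j)⁻¹) - if i = j then (q i)⁻¹ else 0) - Lc i j * q j := by
    intro γ i j
    rw [Matrix.sub_apply, Matrix.smul_apply, hQbarE i j, hQ, Matrix.mul_diagonal,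
      smul_eq_mul]
  have hcolM : ∀ γ : ℝ, ∀ j, ∑ i, (γ • Qbar - Lc * Q) i j = 0 := by
    intro γ j
    rw [Finset.sum_congr rfl fun i _ => hME γ i j]
    simp only [Finset.sum_sub_distrib]
    have h1 : ∑ i, γ * (s⁻¹ * ((q i)⁻¹ * (q j)⁻¹) - if i = j then (q i)⁻¹ else 0)
        = γ * s⁻¹ * (q j)⁻¹ * s - γ * (q j)⁻¹ := by
      have e : ∀ i, γ * (s⁻¹ * ((q i)⁻¹ * (q j)⁻¹) - if i = j then (q i)⁻¹ else 0)
          = γ * s⁻¹ * (q j)⁻¹ * (q i)⁻¹ - (if i = j then γ * (q i)⁻¹ else 0) := by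
        intro i
        rcases eq_or_ne i j with rfl | h
        · simp only [eq_self_iff_true, if_true]; ring
        · simp only [if_neg h]; ring
      rw [Finset.sum_congr rfl fun i _ => e i, Finset.sum_sub_distrib, ← Finset.mul_sum,
        Finset.sum_ite_eq']
      simp [hs]
    have h2 : ∑ i, Lc i j * q j = 0 := by
      rw [← Finset.sum_mul]
      have hcol : ∑ i, Lc i j = 0 := by
        rw [Finset.sum_congr rfl fun i _ => hsymm.apply j i]
        exact hrow j
      rw [hcol, zero_mul]
    rw [h1, h2, sub_zero]
    have hss : s * s⁻¹ = 1 := mul_inv_cancel₀ hspos.ne'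
    linear_combination (γ * (q j)⁻¹) * hss
  have hker0 : ∀ γ : ℝ, 0 ≤ γ → ∀ v : Fin n → ℝ, ∑ i, v i = 0 →
      (γ • Qbar - Lc * Q) *ᵥ v = 0 → v = 0 :=
    fun γ hγ v h1 h2 => kerLemma hn q hq Lc hsymm hoff hrow hker hγ (hME γ) h1 h2
  have main : ∀ γ : ℝ, 0 ≤ γ →
      IsUnit (γ • Qbar - Lc * Q + onesMat n).det ∧
      IsUnit (γ • Qbar - Lc * Q + (n : ℝ)⁻¹ • onesMat n).det ∧
      IsUnit ((Matrix.fromRows (γ • Qbar - Lc * Q)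
          (Matrix.of fun (_ : Fin 1) (_ : Fin n) => (1:ℝ)))ᵀ *
        Matrix.fromRows (γ • Qbar - Lc * Q)
          (Matrix.of fun (_ : Fin 1) (_ : Fin n) => (1:ℝ))).det := by
    intro γ hγ
    refine ⟨?_, ?_, ?_⟩
    · rw [isUnit_iff_ne_zero]
      intro hdet
      obtain ⟨v, hv0, hv⟩ := Matrix.exists_mulVec_eq_zero_iff.mpr hdet
      have hv' : ((γ • Qbar - Lc * Q) + (1:ℝ) • onesMat n) *ᵥ v = 0 := by
        rwa [one_smul]
      obtain ⟨h1, h2⟩ := addOnes (hcolM γ) (c := 1) (by simpa using hnR.ne') hv'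
      exact hv0 (hker0 γ hγ v h1 h2)
    · rw [isUnit_iff_ne_zero]
      intro hdet
      obtain ⟨v, hv0, hv⟩ := Matrix.exists_mulVec_eq_zero_iff.mpr hdet
      have hcn : ((n:ℝ)⁻¹ * n : ℝ) ≠ 0 := by
        rw [inv_mul_cancel₀ hnR.ne']
        exact one_ne_zero
      obtain ⟨h1, h2⟩ := addOnes (hcolM γ) (c := (n:ℝ)⁻¹) hcn hv
      exact hv0 (hker0 γ hγ v h1 h2)
    · rw [isUnit_iff_ne_zero]
      intro hdet
      obtain ⟨v, hv0, hv⟩ := Matrix.exists_mulVec_eq_zero_iff.mpr hdet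
      set F := Matrix.fromRows (γ • Qbar - Lc * Q)
        (Matrix.of fun (_ : Fin 1) (_ : Fin n) => (1:ℝ)) with hF
      have hFv : F *ᵥ v = 0 := by
        have h0 : v ⬝ᵥ ((Fᵀ * F) *ᵥ v) = 0 := by rw [hv, dotProduct_zero]
        rw [← Matrix.mulVec_mulVec, Matrix.dotProduct_mulVec, Matrix.vecMul_transpose] at h0
        exact dotProduct_self_eq_zero.mp h0
      rw [Matrix.fromRows_mulVec] at hFv
      have h2 : (γ • Qbar - Lc * Q) *ᵥ v = 0 := funext fun i => congrFun hFv (Sum.inl i)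
      have h1 : ∑ i, v i = 0 := by
        have := congrFun hFv (Sum.inr 0)
        simpa [mulVec, dotProduct] using this
      exact hv0 (hker0 γ hγ v h1 h2)
  refine ⟨main, ?_⟩
  have h := (main 0 le_rfl).2.1
  rw [zero_smul, zero_sub] at h
  rwa [hΦ]
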